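/- Let ω ∈ (0, π) satisfy ω + tan ω = 0. For each nonnegative integer k, let b_k be the unique solution of 2πk = 2πβ·sqrt(1 - (sec ω/(2πβ))²) - arccos(sec ω/(2πβ)) and set z_k = k/b_k + (1/(2πb_k))·arccos(sec ω/(2πb_k)). Then z_k = sin(2πb_k z_k) and 2πb_k·cos(2πb_k z_k) = sec ω. -/

import Mathlib

open Real

theorem stmt_15 (ω : ℝ) (hω : ω ∈ Set.Ioo 0 π) (hωeq : ω + Real.tan ω = 0)
    (k : ℕ) (b z : ℝ)
    (hb : |(Real.cos ω)⁻¹| / (2 * π) ≤ b ∧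
      2 * π * k = 2 * π * b * Real.sqrt (1 - ((Real.cos ω)⁻¹ / (2 * π * b)) ^ 2)
        - Real.arccos ((Real.cos ω)⁻¹ / (2 * π * b)))
    (hz : z = k / b + 1 / (2 * π * b) * Real.arccos ((Real.cos ω)⁻¹ / (2 * π * b))) :
    z = Real.sin (2 * π * b * z) ∧
      2 * π * b * Real.cos (2 * π * b * z) = (Real.cos ω)⁻¹ := by
  obtain ⟨hb1, hb2⟩ := hb
  have hπ := Real.pi_pos
  have hcos : Real.cos ω ≠ 0 := by
    intro h
    rw [Real.tan_eq_sin_div_cos, h, div_zero, add_zero] at hωeq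
    exact absurd hωeq (ne_of_gt hω.1)
  have hsec : 0 < |(Real.cos ω)⁻¹| := abs_pos.2 (inv_ne_zero hcos)
  have hbpos : 0 < b := lt_of_lt_of_le (by positivity) hb1
  set c := (Real.cos ω)⁻¹ / (2 * π * b) with hc
  have hsecle : |(Real.cos ω)⁻¹| ≤ 2 * π * b := by
    have := (div_le_iff₀ (by positivity : (0:ℝ) < 2 * π)).1 hb1
    linarith
  have hcabs : |c| ≤ 1 := by
    rw [hc, abs_div, abs_of_pos (by positivity : (0:ℝ) < 2 * π * b),
      div_le_one (by positivity)]
    exact hsecle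
  have h1 : -1 ≤ c := (abs_le.1 hcabs).1
  have h2 : c ≤ 1 := (abs_le.1 hcabs).2
  have key : 2 * π * b * z = Real.arccos c + k * (2 * π) := by
    rw [hz]
    field_simp
    ring
  have hsq : Real.sqrt (1 - c ^ 2) = z := by
    have h3 : 2 * π * b * Real.sqrt (1 - c ^ 2) = 2 * π * b * z := by
      have h0 : (0:ℝ) ≤ Real.arccos c := Real.arccos_nonneg c
      linarith [key, hb2]
    exact mul_left_cancel₀ (by positivity : (2:ℝ) * π * b ≠ 0) h3
  constructor
  · rw [key, Real.sin_add_nat_mul_two_pi, Real.sin_arccos, hsq]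
  · rw [key, Real.cos_add_nat_mul_two_pi, Real.cos_arccos h1 h2, hc]
    field_simp
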